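/- Let A be a real m×n matrix with full row rank m, b ∈ ℝᵐ, and P = I − Aᵀ(AAᵀ)⁻¹A. Let f : ℝⁿ → ℝ be differentiable, let H : ℝⁿ → ℝ^{n×n} be any matrix-valued function, and let x : ℝ → ℝⁿ be differentiable with x'(t) = −P H(x(t)) P ∇f(x(t)) for all t. If A x(0) = b, then A x(t) = b for all t ∈ ℝ. -/

import Mathlib

open Matrix

lemma aux_isUnit {m n : ℕ} (A : Matrix (Fin m) (Fin n) ℝ) (hA : A.rank = m) :
    IsUnit (A * Aᵀ) := by
  rw [← Matrix.mulVec_surjective_iff_isUnit]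
  have hrank : (A * Aᵀ).rank = m := by rw [Matrix.rank_self_mul_transpose, hA]
  have : LinearMap.range (A * Aᵀ).mulVecLin = ⊤ := by
    apply Submodule.eq_top_of_finrank_eq
    rw [← Matrix.rank]
    simp [hrank]
  intro y
  have := this ▸ Submodule.mem_top (x := y)
  exact this

/-- The generalized projected gradient flow preserves the linear constraint:
if `x'(t) = -P H(x(t)) P ∇f(x(t))` and `A x(0) = b`, then `A x(t) = b` for all `t`. -/
theorem stmt_9 {m n : ℕ} (A : Matrix (Fin m) (Fin n) ℝ) (hA : A.rank = m) (b : Fin m → ℝ)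
    (P : Matrix (Fin n) (Fin n) ℝ) (hP : P = 1 - Aᵀ * (A * Aᵀ)⁻¹ * A)
    (f : EuclideanSpace ℝ (Fin n) → ℝ) (hf : Differentiable ℝ f)
    (g : EuclideanSpace ℝ (Fin n) → Fin n → ℝ) (hg : ∀ v, gradient f v = g v)
    (H : EuclideanSpace ℝ (Fin n) → Matrix (Fin n) (Fin n) ℝ)
    (x : ℝ → EuclideanSpace ℝ (Fin n))
    (hx : ∀ t : ℝ,
      HasDerivAt x (-(WithLp.toLp 2 (P *ᵥ (H (x t) *ᵥ (P *ᵥ g (x t)))) : EuclideanSpace ℝ (Fin n))) t)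
    (h0 : A *ᵥ (x 0 : Fin n → ℝ) = b) :
    ∀ t : ℝ, A *ᵥ (x t : Fin n → ℝ) = b := by
  have hunit : IsUnit (A * Aᵀ) := aux_isUnit A hA
  have hAP : A * P = 0 := by
    rw [hP, Matrix.mul_sub, Matrix.mul_one, ← Matrix.mul_assoc, ← Matrix.mul_assoc,
      Matrix.mul_nonsing_inv _ (Matrix.isUnit_iff_isUnit_det _ |>.mp hunit),
      Matrix.one_mul, sub_self]
  -- linear map from EuclideanSpace to Fin m → ℝ
  let L : EuclideanSpace ℝ (Fin n) →L[ℝ] (Fin m → ℝ) :=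
    LinearMap.toContinuousLinearMap
      ((Matrix.mulVecLin A : (Fin n → ℝ) →ₗ[ℝ] (Fin m → ℝ)).comp
        (WithLp.linearEquiv 2 ℝ (Fin n → ℝ)).toLinearMap)
  have hy : ∀ t : ℝ, HasDerivAt (fun t => L (x t)) 0 t := by
    intro t
    have := (L.hasFDerivAt.comp_hasDerivAt t (hx t))
    convert this using 1
    show (0 : Fin m → ℝ) = L _
    have : L (-(WithLp.toLp 2 (P *ᵥ (H (x t) *ᵥ (P *ᵥ g (x t)))) : EuclideanSpace ℝ (Fin n)))
        = A *ᵥ (-(P *ᵥ (H (x t) *ᵥ (P *ᵥ g (x t))))) := rfl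
    rw [this, Matrix.mulVec_neg, Matrix.mulVec_mulVec, hAP]
    simp
    all_goals rfl
  have hconst : ∀ t : ℝ, (fun t => L (x t)) t = (fun t => L (x t)) 0 := by
    intro t
    exact is_const_of_deriv_eq_zero (fun s => (hy s).differentiableAt)
      (fun s => (hy s).deriv) t 0
  intro t
  have := hconst t
  show A *ᵥ (x t : Fin n → ℝ) = b
  calc A *ᵥ (x t : Fin n → ℝ) = L (x t) := rfl
    _ = L (x 0) := this
    _ = A *ᵥ (x 0 : Fin n → ℝ) := rfl
    _ = b := h0
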